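/- Let (α_i)_{i≥1} be a sequence of nonnegative integers satisfying α_{j+1} α_{j+2} … ≤ α_1 α_2 … lexicographically for all j ≥ 1, and (α_1 − α_{j+1})(α_1 − α_{j+2}) … < α_1 α_2 … lexicographically for all j ≥ 1. Then there exist arbitrarily large integers m such that (α_1 − α_{j+1}) … (α_1 − α_m) < α_1 … α_{m−j} lexicographically (as finite words) for all 0 ≤ j < m. -/
import Mathlib


/-- `c` is a `q`-expansion: a sequence of nonnegative integers with `c i ≤ q`
(we index from 0, so `c i` stands for the digit `c_{i+1}` of the paper)
such that `∑_{i≥1} c_i q^{-i} = 1`. -/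
def IsExpansion (q : ℝ) (c : ℕ → ℕ) : Prop :=
  (∀ i, (c i : ℝ) ≤ q) ∧ ∑' i : ℕ, (c i : ℝ) / q ^ (i + 1) = 1

/-- The set `𝒰` of univoque numbers: real numbers `q ≥ 1` admitting exactly one
`q`-expansion. -/
def UnivoqueSet : Set ℝ := {q | 1 ≤ q ∧ ∃! c : ℕ → ℕ, IsExpansion q c}

/-- `γ` is the greedy `q`-expansion: for every `n`, `γ n` is the largest
nonnegative integer `k` such that `(∑_{i<n} γ i / q^(i+1)) + k / q^(n+1) ≤ 1`. -/
def IsGreedy (q : ℝ) (γ : ℕ → ℕ) : Prop :=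
  ∀ n : ℕ, IsGreatest
    {k : ℕ | (∑ i ∈ Finset.range n, (γ i : ℝ) / q ^ (i + 1)) + (k : ℝ) / q ^ (n + 1) ≤ 1} (γ n)

/-- `α` is the quasi-greedy `q`-expansion: for every `n`, `α n` is the largest
nonnegative integer `k` such that `(∑_{i<n} α i / q^(i+1)) + k / q^(n+1) < 1`. -/
def IsQuasiGreedy (q : ℝ) (α : ℕ → ℕ) : Prop :=
  ∀ n : ℕ, IsGreatest
    {k : ℕ | (∑ i ∈ Finset.range n, (α i : ℝ) / q ^ (i + 1)) + (k : ℝ) / q ^ (n + 1) < 1} (α n)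

/-- Strict lexicographic order on sequences of nonnegative integers. -/
def LexLT (a b : ℕ → ℕ) : Prop := ∃ n : ℕ, (∀ i < n, a i = b i) ∧ a n < b n

/-- Lexicographic order on sequences of nonnegative integers. -/
def LexLE (a b : ℕ → ℕ) : Prop := LexLT a b ∨ a = b

/-- Strict lexicographic order on finite words of length `n`
(given as functions on the first `n` indices). -/
def WordLT (n : ℕ) (a b : ℕ → ℕ) : Prop := ∃ i < n, (∀ j < i, a j = b j) ∧ a i < b i

/-- If `(α_i)` satisfies conditions (23) and (24), then there exist arbitrarily
large `m` such that `(α_1-α_{j+1})…(α_1-α_m) < α_1…α_{m-j}` for all `0 ≤ j < m`. -/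
theorem exists_arbitrarily_large_good_m (α : ℕ → ℕ)
    (h1 : ∀ j : ℕ, 1 ≤ j → LexLE (fun i => α (i + j)) α)
    (h2 : ∀ j : ℕ, 1 ≤ j → LexLT (fun i => α 0 - α (i + j)) α) :
    ∀ M : ℕ, ∃ m ≥ M, ∀ j < m, WordLT (m - j) (fun i => α 0 - α (j + i)) α := by
  classical
  -- If the shift by k ≥ 1 agrees with α up to t, then α (k+t) ≤ α t.
  have hle : ∀ k, 1 ≤ k → ∀ t, (∀ i < t, α (k + i) = α i) → α (k + t) ≤ α t := by
    intro k hk t hpre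
    rcases h1 k hk with h | h
    · obtain ⟨s, hps, hss⟩ := h
      have hss' : α (s + k) < α s := hss
      rcases lt_trichotomy s t with hst | rfl | hst
      · have h5 := hpre s hst
        rw [Nat.add_comm] at hss'
        omega
      · rw [Nat.add_comm] at hss'
        exact hss'.le
      · have h5 : α (t + k) = α t := hps t hst
        rw [Nat.add_comm] at h5
        exact h5.le
    · have h5 : α (t + k) = α t := congrFun h t
      rw [Nat.add_comm] at h5
      exact h5.le
  have hα0 : 1 ≤ α 0 := by
    obtain ⟨n, hp, hs⟩ := h2 1 le_rfl
    have hs' : α 0 - α (n + 1) < α n := hs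
    rcases Nat.eq_zero_or_pos n with rfl | hn'
    · omega
    · have h5 : α (n + 0) ≤ α 0 := hle n hn' 0 (fun i hi => absurd hi (Nat.not_lt_zero i))
      rw [Nat.add_zero] at h5
      omega
  -- witnesses for all shifts j (including j = 0)
  have hWall : ∀ j, ∃ n, (∀ i < n, α 0 - α (j + i) = α i) ∧ α 0 - α (j + n) < α n := by
    intro j
    rcases Nat.eq_zero_or_pos j with rfl | hj
    · refine ⟨0, fun i hi => absurd hi (Nat.not_lt_zero i), ?_⟩
      show α 0 - α 0 < α 0
      omega
    · obtain ⟨n, hp, hs⟩ := h2 j hj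
      refine ⟨n, fun i hi => ?_, ?_⟩
      · have h5 : α 0 - α (i + j) = α i := hp i hi
        rw [Nat.add_comm j i]
        exact h5
      · have h5 : α 0 - α (n + j) < α n := hs
        rw [Nat.add_comm j n]
        exact h5
  choose N hN using hWall
  -- interval lemma: a witness for shift j of size nn gives witnesses for shifts j+k, k < nn
  have hint : ∀ j k nn, 1 ≤ k → k < nn →
      (∀ i < nn, α 0 - α (j + i) = α i) → α 0 - α (j + nn) < α nn →
      ∃ n' ≤ nn - k, (∀ i < n', α 0 - α (j + k + i) = α i) ∧ α 0 - α (j + k + n') < α n' := by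
    intro j k nn hk hkn hp hs
    by_cases hcase : ∀ t < nn - k, α (k + t) = α t
    · refine ⟨nn - k, le_rfl, fun i hi => ?_, ?_⟩
      · have e1 := hp (k + i) (by omega)
        have e2 := hcase i hi
        rw [show j + k + i = j + (k + i) by ring]
        omega
      · have e3 := hle k hk (nn - k) hcase
        have e4 : k + (nn - k) = nn := by omega
        rw [e4] at e3
        rw [show j + k + (nn - k) = j + nn by omega]
        omega
    · push_neg at hcase
      have hex : ∃ t, t < nn - k ∧ α (k + t) ≠ α t := hcase
      obtain ⟨ht1, ht2⟩ := Nat.find_spec hex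
      set t := Nat.find hex with htdef
      have hmin : ∀ i < t, α (k + i) = α i := by
        intro i hi
        by_contra hne
        exact (Nat.find_min hex hi) ⟨by omega, hne⟩
      have hlt : α (k + t) < α t := by
        rcases h1 k hk with h | h
        · obtain ⟨s, hps, hss⟩ := h
          have hss' : α (s + k) < α s := hss
          rcases lt_trichotomy s t with hst | rfl | hst
          · have h5 := hmin s hst
            rw [Nat.add_comm] at hss'
            omega
          · rw [Nat.add_comm] at hss'
            exact hss'
          · have h5 : α (t + k) = α t := hps t hst
            rw [Nat.add_comm] at h5
            omega
        · have h5 : α (t + k) = α t := congrFun h t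
          rw [Nat.add_comm] at h5
          omega
      refine ⟨t, by omega, fun i hi => ?_, ?_⟩
      · have e1 := hp (k + i) (by omega)
        have e2 := hmin i hi
        rw [show j + k + i = j + (k + i) by ring]
        omega
      · have e1 := hp (k + t) (by omega)
        rw [show j + k + t = j + (k + t) by ring]
        omega
  -- main construction
  intro M
  set m := M + 2 with hm
  set F := (Finset.range m).sup (fun j => j + N j) with hF
  obtain ⟨j₀, hj₀mem, hj₀⟩ := Finset.exists_mem_eq_sup (Finset.range m)
    (by simp [hm]) (fun j => j + N j)
  have hFm : m - 1 + N (m - 1) ≤ F := by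
    rw [hF]; exact Finset.le_sup (f := fun j => j + N j) (Finset.mem_range.2 (by omega))
  refine ⟨F + 1, by omega, ?_⟩
  intro j hj
  by_cases hjm : j < m
  · have hjF : j + N j ≤ F := by
      rw [hF]; exact Finset.le_sup (f := fun j => j + N j) (Finset.mem_range.2 hjm)
    exact ⟨N j, by omega, (hN j).1, (hN j).2⟩
  · push_neg at hjm
    have hj₀m : j₀ < m := Finset.mem_range.1 hj₀mem
    have hF' : F = j₀ + N j₀ := hj₀
    have hk1 : 1 ≤ j - j₀ := by omega
    have hkN : j - j₀ ≤ N j₀ := by omega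
    rcases lt_or_eq_of_le hkN with hklt | hkeq
    · obtain ⟨n', hn'le, hp', hs'⟩ := hint j₀ (j - j₀) (N j₀) hk1 hklt (hN j₀).1 (hN j₀).2
      rw [show j₀ + (j - j₀) = j by omega] at hp' hs'
      exact ⟨n', by omega, hp', hs'⟩
    · refine ⟨0, by omega, fun i hi => absurd hi (Nat.not_lt_zero i), ?_⟩
      have hs0 : α 0 - α (j₀ + N j₀) < α (N j₀) := (hN j₀).2
      have hle0 : α (N j₀) ≤ α 0 := by
        have h5 := hle (N j₀) (by omega) 0 (fun i hi => absurd hi (Nat.not_lt_zero i))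
        rw [Nat.add_zero] at h5
        exact h5
      show α 0 - α (j + 0) < α 0
      rw [show j + 0 = j₀ + N j₀ by omega]
      omega
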